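/- For all t₁, t₂, t₃ ∈ (-1, 1) and λ ∈ [0,1], we have (t₁ + t₂ + t₃ + t₁t₂t₃) · arctanh(λ(t₁ + t₂ + t₃ + t₁t₂t₃) / (1 + λ(t₁t₂ + t₂t₃ + t₃t₁))) ≤ λ(t₁ + t₂ + t₃ + t₁t₂t₃) · (arctanh(t₁) + arctanh(t₂) + arctanh(t₃)). -/

import Mathlib

noncomputable def arctanh (x : ℝ) : ℝ := (1/2) * Real.log ((1+x)/(1-x))

/-- positivity helper: `0 < 1 - l + l*x` for `l ∈ [0,1]`, `x > 0`. -/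
lemma pos_aux {l x : ℝ} (hl : 0 ≤ l) (hl1 : l ≤ 1) (hx : 0 < x) : 0 < 1 - l + l*x := by
  rcases le_total x 1 with h | h
  · nlinarith
  · nlinarith

/-- `φ(x) = log(1-l+l*x) - l * log x` is antitone on `(0,1]`. -/
lemma phi_le {l x y : ℝ} (hl : 0 ≤ l) (hl1 : l ≤ 1) (hx : 0 < x) (hxy : x ≤ y) (hy1 : y ≤ 1) :
    Real.log (1-l+l*y) - l*Real.log y ≤ Real.log (1-l+l*x) - l*Real.log x := by
  have hder : ∀ z : ℝ, 0 < z →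
      HasDerivAt (fun z => Real.log (1-l+l*z) - l*Real.log z) (l/(1-l+l*z) - l/z) z := by
    intro z hz
    have hpos := pos_aux hl hl1 hz
    have h1 : HasDerivAt (fun z : ℝ => 1-l+l*z) l z := by
      simpa using ((hasDerivAt_id z).const_mul l).const_add (1-l)
    have h2 := h1.log hpos.ne'
    have h3 := (Real.hasDerivAt_log hz.ne').const_mul l
    exact (h2.sub h3).congr_deriv (by ring)
  have hanti : AntitoneOn (fun z => Real.log (1-l+l*z) - l*Real.log z) (Set.Ioc 0 1) := by
    apply antitoneOn_of_deriv_nonpos (convex_Ioc 0 1)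
    · exact fun z hz => (hder z hz.1).continuousAt.continuousWithinAt
    · rw [interior_Ioc]
      exact fun z hz => (hder z hz.1).differentiableAt.differentiableWithinAt
    · rw [interior_Ioc]
      intro z hz
      rw [(hder z hz.1).deriv]
      have hpos := pos_aux hl hl1 hz.1
      have hzd : z ≤ 1-l+l*z := by nlinarith [hz.1.le, hz.2.le]
      have : l/(1-l+l*z) ≤ l/z := div_le_div_of_nonneg_left hl hz.1 hzd
      linarith
  exact hanti ⟨hx, hxy.trans hy1⟩ ⟨hx.trans_le hxy, hy1⟩ hxy

/-- polynomial nonnegativity at the heart of the monotonicity step. -/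
lemma N_nonneg {l x : ℝ} (hl : 0 ≤ l) (hl1 : l ≤ 1) (hx : 1 ≤ x) (hx2 : x < 2) :
    0 ≤ (1-x^3)*(2-x)*(1-l+l*(2-x)^3) + (1-(2-x)^3)*x*(1-l+l*x^3) := by
  have hs : 0 ≤ x - 1 := by linarith
  have hs1 : x - 1 ≤ 1 := by linarith
  have hp : 0 ≤ 3 - 2*(x-1)^2 - (x-1)^3 := by nlinarith [sq_nonneg (x-1)]
  have h1 : 0 ≤ (x-1)^4*(1-l) := mul_nonneg (by positivity) (by linarith)
  have h2 : 0 ≤ l*(x-1)*(3 - 2*(x-1)^2 - (x-1)^3)*(6*(x-1)+2*(x-1)^3) := by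
    have : 0 ≤ 6*(x-1)+2*(x-1)^3 := by nlinarith [pow_nonneg hs 3]
    have := mul_nonneg (mul_nonneg (mul_nonneg hl hs) hp) this
    linarith
  have h3 : 0 ≤ l*(x-1)^4*x^3 := by
    have hx0 : (0:ℝ) ≤ x := by linarith
    have := mul_nonneg (mul_nonneg hl (pow_nonneg hs 4)) (pow_nonneg hx0 3)
    linarith [this]
  nlinarith [h1, h2, h3]

/-- main monotonicity step: `φ(α³) ≤ φ((2-α)³)` for `α ∈ [1,2)`. -/
lemma hstep {l a : ℝ} (hl : 0 ≤ l) (hl1 : l ≤ 1) (ha : 1 ≤ a) (ha2 : a < 2) :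
    Real.log (1-l+l*a^3) - l * Real.log (a^3)
      ≤ Real.log (1-l+l*(2-a)^3) - l * Real.log ((2-a)^3) := by
  set g : ℝ → ℝ := fun x => 3*l*Real.log x - Real.log (1-l+l*x^3)
    - (3*l*Real.log (2-x) - Real.log (1-l+l*(2-x)^3)) with hg
  have hder : ∀ x : ℝ, 0 < x → x < 2 →
      HasDerivAt g (3*l/x - l*(3*x^2)/(1-l+l*x^3)
        - (3*l*(-1)/(2-x) - l*((3:ℕ)*(2-x)^((3:ℕ)-1)*(-1))/(1-l+l*(2-x)^3))) x := by
    intro x hx hx2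
    have hx3 : (0:ℝ) < x^3 := by positivity
    have hbx : (0:ℝ) < 2 - x := by linarith
    have hbx3 : (0:ℝ) < (2-x)^3 := by positivity
    have hd1 := pos_aux hl hl1 hx3
    have hd2 := pos_aux hl hl1 hbx3
    have hcube : HasDerivAt (fun x : ℝ => x^3) (3*x^2) x := by
      simpa using hasDerivAt_pow 3 x
    have hA : HasDerivAt (fun x : ℝ => 1-l+l*x^3) (l*(3*x^2)) x :=
      (hcube.const_mul l).const_add (1-l)
    have hb : HasDerivAt (fun x : ℝ => 2 - x) (-1) x := (hasDerivAt_id x).const_sub 2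
    have hbcube : HasDerivAt (fun x : ℝ => (2-x)^3) ((3:ℕ)*(2-x)^((3:ℕ)-1)*(-1)) x := hb.pow 3
    have hB : HasDerivAt (fun x : ℝ => 1-l+l*(2-x)^3) (l*((3:ℕ)*(2-x)^((3:ℕ)-1)*(-1))) x :=
      (hbcube.const_mul l).const_add (1-l)
    have t1 : HasDerivAt (fun x : ℝ => 3*l*Real.log x) (3*l*x⁻¹) x :=
      (Real.hasDerivAt_log hx.ne').const_mul (3*l)
    have t2 := hA.log hd1.ne'
    have t3 : HasDerivAt (fun x : ℝ => 3*l*Real.log (2-x)) (3*l*((-1)/(2-x))) x :=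
      (hb.log hbx.ne').const_mul (3*l)
    have t4 := hB.log hd2.ne'
    have := (t1.sub t2).sub (t3.sub t4)
    exact this.congr_deriv (by ring)
  rcases eq_or_lt_of_le hl with rfl | hlpos
  · simp
  have h0 : (0:ℝ) < a := by linarith
  have hmono : MonotoneOn g (Set.Ico 1 2) := by
    apply monotoneOn_of_deriv_nonneg (convex_Ico 1 2)
    · exact fun x hx => (hder x (by linarith [hx.1]) hx.2).continuousAt.continuousWithinAt
    · rw [interior_Ico]
      exact fun x hx => (hder x (by linarith [hx.1]) hx.2).differentiableAt.differentiableWithinAt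
    · rw [interior_Ico]
      intro x hx
      obtain ⟨hx1, hx2⟩ := hx
      have hx0 : (0:ℝ) < x := by linarith
      rw [(hder x hx0 hx2).deriv]
      have hx3 : (0:ℝ) < x^3 := by positivity
      have hbx : (0:ℝ) < 2 - x := by linarith
      have hbx3 : (0:ℝ) < (2-x)^3 := by positivity
      have hd1' := pos_aux (le_of_lt hlpos) hl1 hx3
      have hd2' := pos_aux (le_of_lt hlpos) hl1 hbx3
      have hN := N_nonneg (le_of_lt hlpos) hl1 hx1.le hx2
      have heq : 3*l/x - l*(3*x^2)/(1-l+l*x^3)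
          - (3*l*(-1)/(2-x) - l*((3:ℕ)*(2-x)^((3:ℕ)-1)*(-1))/(1-l+l*(2-x)^3))
          = 3*l*(1-l)*((1-x^3)*(2-x)*(1-l+l*(2-x)^3) + (1-(2-x)^3)*x*(1-l+l*x^3))
            / (x*(2-x)*(1-l+l*x^3)*(1-l+l*(2-x)^3)) := by
        field_simp
        ring
      rw [heq]
      apply div_nonneg
      · have h3l : 0 ≤ 3*l*(1-l) := by nlinarith
        exact mul_nonneg h3l hN
      · positivity
  have hga : g 1 ≤ g a := by
    apply hmono (by norm_num) ⟨ha, ha2⟩ ha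
  have hg1 : g 1 = 0 := by norm_num [hg]
  have hla : Real.log (a^3) = 3 * Real.log a := by
    rw [Real.log_pow]; norm_num
  have hlb : Real.log ((2-a)^3) = 3 * Real.log (2-a) := by
    rw [Real.log_pow]; norm_num
  rw [hla, hlb]
  simp only [hg] at hga hg1
  linarith

/-- key lemma: for `0 < B ≤ A` with `A^(1/3)+B^(1/3) ≤ 2`. -/
lemma keyAB {l A B : ℝ} (hl : 0 ≤ l) (hl1 : l ≤ 1) (hA : 0 < A) (hB : 0 < B) (hBA : B ≤ A)
    (hsum : A ^ ((3:ℝ)⁻¹) + B ^ ((3:ℝ)⁻¹) ≤ 2) :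
    Real.log (1-l+l*A) - Real.log (1-l+l*B) ≤ l * (Real.log A - Real.log B) := by
  set a : ℝ := A ^ ((3:ℝ)⁻¹) with hadef
  set b : ℝ := B ^ ((3:ℝ)⁻¹) with hbdef
  have ha3 : a^3 = A := by
    rw [hadef]
    have := Real.rpow_inv_natCast_pow hA.le (n := 3) (by norm_num)
    simpa using this
  have hb3 : b^3 = B := by
    rw [hbdef]
    have := Real.rpow_inv_natCast_pow hB.le (n := 3) (by norm_num)
    simpa using this
  have hapos : 0 < a := Real.rpow_pos_of_pos hA _
  have hbpos : 0 < b := Real.rpow_pos_of_pos hB _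
  have hba : b ≤ a := Real.rpow_le_rpow hB.le hBA (by norm_num)
  have main : Real.log (1-l+l*A) - l*Real.log A ≤ Real.log (1-l+l*B) - l*Real.log B := by
    rcases le_total a 1 with ha1 | ha1
    · have hA1 : A ≤ 1 := by
        rw [← ha3]
        exact pow_le_one₀ hapos.le ha1
      exact phi_le hl hl1 hB hBA hA1
    · have ha2 : a < 2 := by linarith [hbpos, hsum]
      have hbb' : b ≤ 2 - a := by linarith [hsum]
      have h1 := hstep hl hl1 ha1 ha2
      have hx : (0:ℝ) < b^3 := by positivity
      have hxy : b^3 ≤ (2-a)^3 := pow_le_pow_left₀ hbpos.le hbb' 3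
      have hy1 : (2-a)^3 ≤ 1 := pow_le_one₀ (by linarith) (by linarith)
      have h2 := phi_le hl hl1 hx hxy hy1
      rw [ha3] at h1
      rw [hb3] at h2
      linarith
  linarith

lemma mahler3 {t1 t2 t3 : ℝ} (h1a : -1 < t1) (h1b : t1 < 1) (h2a : -1 < t2) (h2b : t2 < 1)
    (h3a : -1 < t3) (h3b : t3 < 1) :
    ((1+t1)*(1+t2)*(1+t3)) ^ ((3:ℝ)⁻¹) + ((1-t1)*(1-t2)*(1-t3)) ^ ((3:ℝ)⁻¹) ≤ 2 := by
  have p1 : (0:ℝ) ≤ 1+t1 := by linarith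
  have p2 : (0:ℝ) ≤ 1+t2 := by linarith
  have p3 : (0:ℝ) ≤ 1+t3 := by linarith
  have q1 : (0:ℝ) ≤ 1-t1 := by linarith
  have q2 : (0:ℝ) ≤ 1-t2 := by linarith
  have q3 : (0:ℝ) ≤ 1-t3 := by linarith
  have hw : (3:ℝ)⁻¹ + (3:ℝ)⁻¹ + (3:ℝ)⁻¹ = 1 := by norm_num
  have hw0 : (0:ℝ) ≤ (3:ℝ)⁻¹ := by norm_num
  have e1 : ((1+t1)*(1+t2)*(1+t3)) ^ ((3:ℝ)⁻¹)
      = (1+t1) ^ ((3:ℝ)⁻¹) * (1+t2) ^ ((3:ℝ)⁻¹) * (1+t3) ^ ((3:ℝ)⁻¹) := by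
    rw [Real.mul_rpow (by positivity) p3, Real.mul_rpow p1 p2]
  have e2 : ((1-t1)*(1-t2)*(1-t3)) ^ ((3:ℝ)⁻¹)
      = (1-t1) ^ ((3:ℝ)⁻¹) * (1-t2) ^ ((3:ℝ)⁻¹) * (1-t3) ^ ((3:ℝ)⁻¹) := by
    rw [Real.mul_rpow (by positivity) q3, Real.mul_rpow q1 q2]
  have g1 := Real.geom_mean_le_arith_mean3_weighted hw0 hw0 hw0 p1 p2 p3 hw
  have g2 := Real.geom_mean_le_arith_mean3_weighted hw0 hw0 hw0 q1 q2 q3 hw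
  rw [e1, e2]
  linarith

theorem stmt_0 (t1 t2 t3 : ℝ) (h1 : t1 ∈ Set.Ioo (-1:ℝ) 1) (h2 : t2 ∈ Set.Ioo (-1:ℝ) 1)
    (h3 : t3 ∈ Set.Ioo (-1:ℝ) 1) (l : ℝ) (hl : l ∈ Set.Icc (0:ℝ) 1) :
    (t1 + t2 + t3 + t1*t2*t3) *
      arctanh (l*(t1 + t2 + t3 + t1*t2*t3) / (1 + l*(t1*t2 + t2*t3 + t3*t1)))
    ≤ l * (t1 + t2 + t3 + t1*t2*t3) * (arctanh t1 + arctanh t2 + arctanh t3) := by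
  obtain ⟨h1a, h1b⟩ := h1
  obtain ⟨h2a, h2b⟩ := h2
  obtain ⟨h3a, h3b⟩ := h3
  obtain ⟨hl0, hl1⟩ := hl
  have p1 : (0:ℝ) < 1+t1 := by linarith
  have p2 : (0:ℝ) < 1+t2 := by linarith
  have p3 : (0:ℝ) < 1+t3 := by linarith
  have q1 : (0:ℝ) < 1-t1 := by linarith
  have q2 : (0:ℝ) < 1-t2 := by linarith
  have q3 : (0:ℝ) < 1-t3 := by linarith
  have hA : (0:ℝ) < (1+t1)*(1+t2)*(1+t3) := by positivity
  have hB : (0:ℝ) < (1-t1)*(1-t2)*(1-t3) := by positivity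
  -- positivity of 1 + l*P
  have hPform : 1 + l*(t1*t2 + t2*t3 + t3*t1)
      = 1 - l + l*(((1+t1)*(1+t2)*(1+t3) + (1-t1)*(1-t2)*(1-t3))/2) := by ring
  have hPpos : (0:ℝ) < 1 + l*(t1*t2 + t2*t3 + t3*t1) := by
    rw [hPform]
    exact pos_aux hl0 hl1 (by positivity)
  have hmlA : (0:ℝ) < 1 - l + l*((1+t1)*(1+t2)*(1+t3)) := pos_aux hl0 hl1 hA
  have hmlB : (0:ℝ) < 1 - l + l*((1-t1)*(1-t2)*(1-t3)) := pos_aux hl0 hl1 hB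
  -- sum of arctanh
  have hsum_eq : arctanh t1 + arctanh t2 + arctanh t3
      = (Real.log ((1+t1)*(1+t2)*(1+t3)) - Real.log ((1-t1)*(1-t2)*(1-t3)))/2 := by
    simp only [arctanh]
    rw [Real.log_div p1.ne' q1.ne', Real.log_div p2.ne' q2.ne', Real.log_div p3.ne' q3.ne',
      Real.log_mul (by positivity) p3.ne', Real.log_mul p1.ne' p2.ne',
      Real.log_mul (by positivity) q3.ne', Real.log_mul q1.ne' q2.ne']
    ring
  -- the big arctanh
  have hbig_eq : arctanh (l*(t1 + t2 + t3 + t1*t2*t3) / (1 + l*(t1*t2 + t2*t3 + t3*t1)))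
      = (Real.log (1 - l + l*((1+t1)*(1+t2)*(1+t3)))
        - Real.log (1 - l + l*((1-t1)*(1-t2)*(1-t3))))/2 := by
    simp only [arctanh]
    have hx1 : 1 + l*(t1 + t2 + t3 + t1*t2*t3) / (1 + l*(t1*t2 + t2*t3 + t3*t1))
        = (1 - l + l*((1+t1)*(1+t2)*(1+t3))) / (1 + l*(t1*t2 + t2*t3 + t3*t1)) := by
      rw [eq_div_iff hPpos.ne', add_mul, div_mul_cancel₀ _ hPpos.ne']
      ring
    have hx2 : 1 - l*(t1 + t2 + t3 + t1*t2*t3) / (1 + l*(t1*t2 + t2*t3 + t3*t1))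
        = (1 - l + l*((1-t1)*(1-t2)*(1-t3))) / (1 + l*(t1*t2 + t2*t3 + t3*t1)) := by
      rw [eq_div_iff hPpos.ne', sub_mul, div_mul_cancel₀ _ hPpos.ne']
      ring
    have hq : (1 - l + l*((1+t1)*(1+t2)*(1+t3))) / (1 + l*(t1*t2 + t2*t3 + t3*t1))
        / ((1 - l + l*((1-t1)*(1-t2)*(1-t3))) / (1 + l*(t1*t2 + t2*t3 + t3*t1)))
        = (1 - l + l*((1+t1)*(1+t2)*(1+t3))) / (1 - l + l*((1-t1)*(1-t2)*(1-t3))) := by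
      rw [div_div_div_comm, div_self hPpos.ne', div_one]
    rw [hx1, hx2, hq, Real.log_div hmlA.ne' hmlB.ne']
    ring
  rw [hbig_eq, hsum_eq]
  rcases le_total 0 (t1 + t2 + t3 + t1*t2*t3) with hS | hS
  · have hBA : (1-t1)*(1-t2)*(1-t3) ≤ (1+t1)*(1+t2)*(1+t3) := by nlinarith
    have hkey := keyAB hl0 hl1 hA hB hBA (mahler3 h1a h1b h2a h2b h3a h3b)
    have hmul := mul_le_mul_of_nonneg_left hkey hS
    linarith [hmul]
  · have hAB : (1+t1)*(1+t2)*(1+t3) ≤ (1-t1)*(1-t2)*(1-t3) := by nlinarith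
    have hsum2 : ((1-t1)*(1-t2)*(1-t3)) ^ ((3:ℝ)⁻¹)
        + ((1+t1)*(1+t2)*(1+t3)) ^ ((3:ℝ)⁻¹) ≤ 2 := by
      have := mahler3 h1a h1b h2a h2b h3a h3b
      linarith
    have hkey := keyAB hl0 hl1 hB hA hAB hsum2
    have hmul := mul_le_mul_of_nonpos_left hkey hS
    linarith [hmul]
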